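/- arXiv:2509.07255 — 2 statements merged into one kernel-verified Lean document; each statement's English description precedes it below -/
import Mathlib

section
/- Let X₁,…,X_N be independent exponential random variables with means μ₁,…,μ_N satisfying Σμᵢ² ≤ A² and max μᵢ ≤ B. Fix a > 1 and γ = a·e^{1/a}/(a+1) + 2/(e(a³-a)) - 1. Then Pr[Σ Xᵢ ≥ t + Σ μᵢ] ≤ exp(-t²/(4γa²A²)) if t ≤ 2γaA²/B, and Pr[Σ Xᵢ ≥ t + Σ μᵢ] ≤ exp(-(t/(aB) - γA²/B²)) if t ≥ 2γaA²/B. -/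
open MeasureTheory ProbabilityTheory

open Real Set




lemma lemE {z : ℝ} (hz : 0 ≤ z) : z^2 + 6*z + 12 ≤ Real.exp z * (z^2 - 6*z + 12) := by
  have h := Real.sum_le_exp_of_nonneg hz 8
  have hp : z^2 - 6*z + 12 > 0 := by nlinarith [sq_nonneg (z-3)]
  have hexp : (1 : ℝ) + z + z^2/2 + z^3/6 + z^4/24 + z^5/120 + z^6/720 + z^7/5040 ≤ Real.exp z := by
    simp [Finset.sum_range_succ, Nat.factorial] at h
    norm_num at h
    linarith
  nlinarith [mul_le_mul_of_nonneg_right hexp hp.le, pow_nonneg hz 5, pow_nonneg hz 6, pow_nonneg hz 7, pow_nonneg hz 8, pow_nonneg hz 9]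


lemma psi_nonneg {y : ℝ} (hy : 0 ≤ y) : Real.exp (-y) * (2 - 2*y - y^2) ≤ 2*(1-y)^2 := by
  have h3 : (1 : ℝ) + y + y^2/2 ≤ Real.exp y := by
    have h := Real.sum_le_exp_of_nonneg hy 3
    simp [Finset.sum_range_succ, Nat.factorial] at h
    linarith
  have hep : 0 < Real.exp y := Real.exp_pos y
  rw [Real.exp_neg, inv_mul_le_iff₀ hep]
  nlinarith [mul_le_mul_of_nonneg_left h3 (by positivity : (0:ℝ) ≤ 2*(1-y)^2), sq_nonneg (y*y)]

lemma vpos {y : ℝ} (h1 : 0 < y) (h2 : y < 1) : 0 < y^2 * (1-y) :=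
  mul_pos (pow_pos h1 2) (by linarith)

lemma phi_mono : MonotoneOn (fun y : ℝ => (Real.exp (-y) - 1 + y) / (y^2 * (1-y))) (Ioo (0:ℝ) 1) := by
  have hint : interior (Ioo (0:ℝ) 1) = Ioo 0 1 := interior_Ioo
  have hderiv : ∀ y ∈ Ioo (0:ℝ) 1,
      HasDerivAt (fun y : ℝ => (Real.exp (-y) - 1 + y) / (y^2 * (1-y)))
        (((1 - Real.exp (-y)) * (y^2 * (1-y)) - (Real.exp (-y) - 1 + y) * (2*y - 3*y^2)) / (y^2 * (1-y))^2) y := by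
    intro y hy
    have hv : y^2 * (1-y) ≠ 0 := (vpos hy.1 hy.2).ne'
    have hu : HasDerivAt (fun t : ℝ => Real.exp (-t) - 1 + t) (1 - Real.exp (-y)) y := by
      have h1 : HasDerivAt (fun t : ℝ => Real.exp (-t)) (-Real.exp (-y)) y := by
        exact ((Real.hasDerivAt_exp (-y)).comp y (hasDerivAt_neg y)).congr_deriv (by ring)
      have := (h1.sub_const 1).add (hasDerivAt_id y)
      exact this.congr_deriv (by ring)
    have hw : HasDerivAt (fun t : ℝ => t^2 * (1-t)) (2*y - 3*y^2) y := by
      have := (hasDerivAt_pow 2 y).mul ((hasDerivAt_id y).const_sub 1)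
      exact this.congr_deriv (by simp; ring)
    exact hu.div hw hv
  apply monotoneOn_of_deriv_nonneg (convex_Ioo 0 1)
  · apply ContinuousOn.div
    · fun_prop
    · fun_prop
    · intro y hy
      exact (vpos hy.1 hy.2).ne'
  · rw [hint]
    intro y hy
    exact (hderiv y hy).differentiableAt.differentiableWithinAt
  · rw [hint]
    intro y hy
    rw [(hderiv y hy).deriv]
    have hy0 := hy.1
    have hy1 := hy.2
    have hpsi := psi_nonneg hy0.le
    have hnum : (1 - Real.exp (-y)) * (y^2 * (1-y)) - (Real.exp (-y) - 1 + y) * (2*y - 3*y^2)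
        = y * (2*(1-y)^2 - Real.exp (-y) * (2 - 2*y - y^2)) := by ring
    apply div_nonneg _ (sq_nonneg _)
    rw [hnum]
    exact mul_nonneg hy0.le (by linarith)


-- F(x) = exp(-x)(1+x) - exp(x)(1-x) ≤ 2 x³ exp(-1) on (0, 1]
lemma lemB {x : ℝ} (h0 : 0 < x) (h1 : x ≤ 1) :
    Real.exp (-x) * (1+x) - Real.exp x * (1-x) ≤ 2 * x^3 * Real.exp (-1) := by
  have hmono : MonotoneOn (fun t : ℝ => (Real.exp (-t) * (1+t) - Real.exp t * (1-t)) / t^3)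
      (Ioc (0:ℝ) 1) := by
    have hint : interior (Ioc (0:ℝ) 1) = Ioo 0 1 := interior_Ioc
    have hderiv : ∀ t ∈ Ioo (0:ℝ) 1,
        HasDerivAt (fun t : ℝ => (Real.exp (-t) * (1+t) - Real.exp t * (1-t)) / t^3)
          ((t * (Real.exp t - Real.exp (-t)) * t^3 -
            (Real.exp (-t) * (1+t) - Real.exp t * (1-t)) * (3*t^2)) / (t^3)^2) t := by
      intro t ht
      have ht0' := ht.1
      have ht3 : (t:ℝ)^3 ≠ 0 := by positivity
      have he : HasDerivAt (fun s : ℝ => Real.exp (-s)) (-Real.exp (-t)) t := by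
        exact ((Real.hasDerivAt_exp (-t)).comp t (hasDerivAt_neg t)).congr_deriv (by ring)
      have hu : HasDerivAt (fun s : ℝ => Real.exp (-s) * (1+s) - Real.exp s * (1-s))
          (t * (Real.exp t - Real.exp (-t))) t := by
        have h1 : HasDerivAt (fun s : ℝ => Real.exp (-s) * (1+s))
            (-Real.exp (-t) * (1+t) + Real.exp (-t) * 1) t :=
          he.mul ((hasDerivAt_id t).const_add 1)
        have h2 : HasDerivAt (fun s : ℝ => Real.exp s * (1-s))
            (Real.exp t * (1-t) + Real.exp t * (-1)) t :=
          (Real.hasDerivAt_exp t).mul ((hasDerivAt_id t).const_sub 1)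
        have := h1.sub h2
        exact this.congr_deriv (by ring)
      have hw : HasDerivAt (fun s : ℝ => s^3) (3*t^2) t := by
        simpa using hasDerivAt_pow 3 t
      exact hu.div hw ht3
    apply monotoneOn_of_deriv_nonneg (convex_Ioc 0 1)
    · apply ContinuousOn.div
      · fun_prop
      · fun_prop
      · intro t ht
        have := ht.1; positivity
    · rw [hint]
      intro t ht
      exact (hderiv t ht).differentiableAt.differentiableWithinAt
    · rw [hint]
      intro t ht
      rw [(hderiv t ht).deriv]
      apply div_nonneg _ (sq_nonneg _)
      have ht0 := ht.1
      have hE := lemE (z := 2*t) (by linarith)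
      have hep := Real.exp_pos t
      have hepn := Real.exp_pos (-t)
      have h2t : Real.exp (2*t) = Real.exp t * Real.exp t := by
        rw [two_mul, Real.exp_add]
      have hprod : Real.exp (-t) * Real.exp t = 1 := by
        rw [← Real.exp_add]; simp
      -- key : exp t * (t²-3t+3) ≥ exp (-t) * (t²+3t+3)
      have key : Real.exp (-t) * (t^2 + 3*t + 3) ≤ Real.exp t * (t^2 - 3*t + 3) := by
        rw [h2t] at hE
        nlinarith [mul_le_mul_of_nonneg_left hE hepn.le]
      have hnum : t * (Real.exp t - Real.exp (-t)) * t^3 -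
            (Real.exp (-t) * (1+t) - Real.exp t * (1-t)) * (3*t^2)
          = t^2 * (Real.exp t * (t^2 - 3*t + 3) - Real.exp (-t) * (t^2 + 3*t + 3)) := by ring
      rw [hnum]
      exact mul_nonneg (sq_nonneg t) (by linarith)
  have h1' : (1:ℝ) ∈ Ioc (0:ℝ) 1 := by constructor <;> norm_num
  have hx' : x ∈ Ioc (0:ℝ) 1 := ⟨h0, h1⟩
  have := hmono hx' h1' h1
  simp only [one_pow, div_one] at this
  have hG1 : Real.exp (-1) * (1+1) - Real.exp 1 * (1-(1:ℝ)) = 2 * Real.exp (-1) := by ring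
  rw [hG1] at this
  have hx3 : (0:ℝ) < x^3 := by positivity
  calc Real.exp (-x) * (1+x) - Real.exp x * (1-x)
      = ((Real.exp (-x) * (1+x) - Real.exp x * (1-x)) / x^3) * x^3 := by field_simp
    _ ≤ (2 * Real.exp (-1)) * x^3 := by
        apply mul_le_mul_of_nonneg_right this hx3.le
    _ = 2 * x^3 * Real.exp (-1) := by ring

lemma gamma_pos {a γ : ℝ} (ha : 1 < a)
    (hγ : γ = a * Real.exp (1 / a) / (a + 1) + 2 / (Real.exp 1 * (a ^ 3 - a)) - 1) : 0 < γ := by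
  have ha0 : (0:ℝ) < a := by linarith
  have h1 : 1 + 1/a < Real.exp (1/a) := by
    have := Real.add_one_lt_exp (x := 1/a) (by positivity)
    linarith
  have hfirst : 1 < a * Real.exp (1/a) / (a+1) := by
    rw [lt_div_iff₀ (by linarith : (0:ℝ) < a + 1)]
    have h2 : a * (1 + 1/a) = a + 1 := by field_simp
    calc 1 * (a+1) = a * (1 + 1/a) := by rw [h2]; ring
    _ < a * Real.exp (1/a) := (mul_lt_mul_iff_right₀ ha0).2 h1
  have hsecond : 0 < 2 / (Real.exp 1 * (a^3 - a)) := by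
    have h3 : 0 < a^3 - a := by nlinarith [mul_pos (mul_pos (by linarith : (0:ℝ) < a) (by linarith : (0:ℝ) < a - 1)) (by linarith : (0:ℝ) < a+1)]
    positivity
  rw [hγ]; linarith


lemma core_ineq {a γ : ℝ} (ha : 1 < a)
    (hγ : γ = a * Real.exp (1 / a) / (a + 1) + 2 / (Real.exp 1 * (a ^ 3 - a)) - 1)
    {y : ℝ} (hy0 : 0 ≤ y) (hy : y ≤ 1/a) :
    (1 - y)⁻¹ ≤ Real.exp (y + γ * a^2 * y^2) := by
  have ha0 : (0:ℝ) < a := by linarith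
  have hE : (0:ℝ) < Real.exp 1 := Real.exp_pos 1
  set P := Real.exp (-(1/a)) with hP
  set Q := Real.exp (1/a) with hQ
  have hPpos : 0 < P := Real.exp_pos _
  have hQpos : 0 < Q := Real.exp_pos _
  have hB2 : P*(a^2+a) - Q*(a^2-a) ≤ 2/(a*Real.exp 1) := by
    have hB := lemB (x := 1/a) (by positivity) (by rw [div_le_one ha0]; linarith)
    rw [Real.exp_neg 1] at hB
    have h := mul_le_mul_of_nonneg_left hB (by positivity : (0:ℝ) ≤ a^2)
    calc P*(a^2+a) - Q*(a^2-a) = a^2*(P*(1+1/a) - Q*(1-1/a)) := by field_simp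
    _ ≤ a^2*(2*(1/a)^3*(Real.exp 1)⁻¹) := h
    _ = 2/(a*Real.exp 1) := by field_simp
  -- key1 : exp(-(1/a)) - 1 + 1/a ≤ γ (1 - 1/a)
  have key1 : P - 1 + 1/a ≤ γ * (1 - 1/a) := by
    have ha1 : a + 1 ≠ 0 := by positivity
    have ha3 : a^3 - a ≠ 0 := by nlinarith
    have expand : γ * (1 - 1/a) - (P - 1 + 1/a)
        = (2/(a*Real.exp 1) - (P*(a^2+a) - Q*(a^2-a))) / (a*(a+1)) := by
      rw [hγ]
      have ha2 : -1 + a^2 ≠ 0 := by nlinarith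
      have ha2' : a^2 - 1 ≠ 0 := by nlinarith
      field_simp
      ring
    have hnum : 0 ≤ 2/(a*Real.exp 1) - (P*(a^2+a) - Q*(a^2-a)) := by linarith
    have : 0 ≤ γ * (1 - 1/a) - (P - 1 + 1/a) := by
      rw [expand]; positivity
    linarith
  -- main pointwise inequality
  have hmain : Real.exp (-y) - 1 + y ≤ γ * a^2 * (y^2 * (1-y)) := by
    rcases eq_or_lt_of_le hy0 with h0 | h0
    · simp [← h0]
    · have hx0 : (0:ℝ) < 1/a := by positivity
      have hx1 : 1/a < 1 := by rw [div_lt_one ha0]; linarith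
      have hy1 : y < 1 := lt_of_le_of_lt hy hx1
      have hmono := phi_mono (Set.mem_Ioo.2 ⟨h0, hy1⟩) (Set.mem_Ioo.2 ⟨hx0, hx1⟩) hy
      simp only at hmono
      have hvy : 0 < y^2 * (1-y) := mul_pos (pow_pos h0 2) (by linarith)
      have hvx : 0 < (1/a)^2 * (1-1/a) := mul_pos (pow_pos hx0 2) (by linarith)
      have hphix : (Real.exp (-(1/a)) - 1 + 1/a) / ((1/a)^2 * (1-1/a)) ≤ γ * a^2 := by
        rw [div_le_iff₀ hvx]
        calc Real.exp (-(1/a)) - 1 + 1/a ≤ γ * (1 - 1/a) := key1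
        _ = γ * a^2 * ((1/a)^2 * (1-1/a)) := by field_simp
      have := le_trans hmono hphix
      calc Real.exp (-y) - 1 + y = (Real.exp (-y) - 1 + y) / (y^2*(1-y)) * (y^2*(1-y)) := by
            rw [div_mul_cancel₀ _ hvy.ne']
      _ ≤ γ * a^2 * (y^2 * (1-y)) := mul_le_mul_of_nonneg_right this hvy.le
  -- conclude
  have hy1 : y < 1 := lt_of_le_of_lt hy (by rw [div_lt_one ha0]; linarith)
  have h1y : (0:ℝ) < 1 - y := by linarith
  set c := γ * a^2 * y^2 with hc
  have hstep : Real.exp (-y) ≤ (1-y) * Real.exp c := by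
    have h1 : Real.exp (-y) ≤ (1-y) * (1 + c) := by nlinarith
    have h2 : 1 + c ≤ Real.exp c := by linarith [Real.add_one_le_exp c]
    calc Real.exp (-y) ≤ (1-y)*(1+c) := h1
    _ ≤ (1-y)*Real.exp c := by nlinarith
  have h2 : Real.exp (-y) * Real.exp y ≤ (1-y) * Real.exp c * Real.exp y :=
    mul_le_mul_of_nonneg_right hstep (Real.exp_pos y).le
  rw [← Real.exp_add] at h2
  simp only [neg_add_cancel, Real.exp_zero] at h2
  rw [inv_le_iff_one_le_mul₀ h1y]
  calc (1:ℝ) ≤ (1-y) * Real.exp c * Real.exp y := h2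
  _ = Real.exp (y + c) * (1 - y) := by rw [Real.exp_add]; ring


lemma expPDFReal_eq (r x : ℝ) :
    exponentialPDFReal r x = if 0 ≤ x then r * Real.exp (-(r * x)) else 0 := by
  rw [exponentialPDFReal, gammaPDFReal]
  simp only [rpow_one, Real.Gamma_one, div_one, sub_self, rpow_zero, mul_one]

lemma expMeasure_integral {r l : ℝ} (hr : 0 < r) (hl : l < r) :
    Integrable (fun x => Real.exp (l * x)) (expMeasure r) ∧
      ∫ x, Real.exp (l * x) ∂(expMeasure r) = r / (r - l) := by
  have hb : 0 < r - l := by linarith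
  set g : ℝ → ℝ := fun x => exponentialPDFReal r x * Real.exp (l * x) with hg
  have hgmeas : Measurable g := (measurable_exponentialPDFReal r).mul (by fun_prop)
  have hgnn : ∀ x, 0 ≤ g x := fun x =>
    mul_nonneg (exponentialPDFReal_nonneg hr x) (Real.exp_pos _).le
  have hgIci : ∀ x ∈ Ici (0:ℝ), g x = r * Real.exp (-((r-l) * x)) := by
    intro x hx
    simp only [hg, expPDFReal_eq, if_pos (mem_Ici.1 hx)]
    rw [mul_assoc, ← Real.exp_add]
    ring_nf
  have hgIio : ∀ x ∈ Iio (0:ℝ), g x = 0 := by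
    intro x hx
    simp only [hg, expPDFReal_eq, if_neg (not_le.2 (mem_Iio.1 hx)), zero_mul]
  have hgint : Integrable g := by
    rw [← integrableOn_univ, ← Set.Iio_union_Ici (a := (0:ℝ))]
    apply IntegrableOn.union
    · exact (integrableOn_congr_fun hgIio measurableSet_Iio).2 integrableOn_zero
    · apply (integrableOn_congr_fun hgIci measurableSet_Ici).2
      rw [integrableOn_Ici_iff_integrableOn_Ioi]
      have h1 := (exp_neg_integrableOn_Ioi 0 hb).const_mul r
      have : (fun x : ℝ => r * Real.exp (-((r-l) * x))) = fun x : ℝ => r * Real.exp (-(r-l) * x) := by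
        funext x; ring_nf
      rw [IntegrableOn, this]
      exact h1
  have hval : ∫ x, g x = r / (r - l) := by
    rw [← setIntegral_univ, ← Set.Iio_union_Ici (a := (0:ℝ)),
      setIntegral_union (Set.Iio_disjoint_Ici le_rfl) measurableSet_Ici
        hgint.integrableOn hgint.integrableOn]
    rw [setIntegral_eq_zero_of_forall_eq_zero hgIio, zero_add]
    rw [setIntegral_congr_fun measurableSet_Ici hgIci]
    rw [← setIntegral_congr_set Ioi_ae_eq_Ici]
    rw [integral_const_mul]
    have h2 : ∫ x in Ioi (0:ℝ), Real.exp (-((r-l) * x)) = (1/(r-l))^(1:ℝ) * Real.Gamma 1 := by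
      rw [← Real.integral_rpow_mul_exp_neg_mul_Ioi one_pos hb]
      apply setIntegral_congr_fun measurableSet_Ioi
      intro x hx
      simp
    rw [h2]
    simp [Real.Gamma_one]
    field_simp
  -- now transfer to expMeasure = withDensity
  have hexpm : expMeasure r = volume.withDensity (fun x => ENNReal.ofReal (exponentialPDFReal r x)) := rfl
  have hL : ∀ (f : ℝ → ℝ), Measurable f → (∀ x, 0 ≤ f x) →
      ∫⁻ x, ENNReal.ofReal (f x) ∂(expMeasure r)
        = ∫⁻ x, ENNReal.ofReal (exponentialPDFReal r x * f x) := by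
    intro f hf hf0
    rw [hexpm, lintegral_withDensity_eq_lintegral_mul _
      ((measurable_exponentialPDFReal r).ennreal_ofReal) (hf.ennreal_ofReal)]
    congr 1
    ext x
    simp only [Pi.mul_apply]
    rw [ENNReal.ofReal_mul (exponentialPDFReal_nonneg hr x)]
  have hLexp : ∫⁻ x, ENNReal.ofReal (Real.exp (l * x)) ∂(expMeasure r)
      = ENNReal.ofReal (r / (r-l)) := by
    rw [hL _ (by fun_prop) (fun x => (Real.exp_pos _).le), ← hval,
      ← ofReal_integral_eq_lintegral_ofReal hgint (ae_of_all _ hgnn)]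
  have hint : Integrable (fun x => Real.exp (l * x)) (expMeasure r) := by
    constructor
    · exact (Measurable.aestronglyMeasurable (by fun_prop))
    · rw [hasFiniteIntegral_iff_ofReal (ae_of_all _ (fun x => (Real.exp_pos _).le))]
      rw [hLexp]
      exact ENNReal.ofReal_lt_top
  refine ⟨hint, ?_⟩
  rw [integral_eq_lintegral_of_nonneg_ae (ae_of_all _ (fun x => (Real.exp_pos (l*x)).le))
    ((Measurable.aestronglyMeasurable (by fun_prop : Measurable fun x => Real.exp (l*x)))), hLexp, ENNReal.toReal_ofReal (by positivity)]


lemma iIndepFun_ae_congr {Ω : Type*} [MeasurableSpace Ω] {P : Measure Ω} {N : ℕ}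
    {X Y : Fin N → Ω → ℝ} (h : iIndepFun X P)
    (hXY : ∀ i, X i =ᵐ[P] Y i) : iIndepFun Y P := by
  rw [iIndepFun_iff_measure_inter_preimage_eq_mul] at h ⊢
  intro S sets hsets
  have hae : ∀ᵐ ω ∂P, ∀ i, X i ω = Y i ω := ae_all_iff.2 hXY
  have h1 : P (⋂ i ∈ S, Y i ⁻¹' sets i) = P (⋂ i ∈ S, X i ⁻¹' sets i) := by
    apply measure_congr
    rw [Filter.eventuallyEq_set]
    filter_upwards [hae] with ω hω
    simp only [Set.mem_iInter, Set.mem_preimage]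
    constructor <;> intro hh i hi
    · rw [hω i]; exact hh i hi
    · rw [← hω i]; exact hh i hi
  have h2 : ∀ i, P (Y i ⁻¹' sets i) = P (X i ⁻¹' sets i) := by
    intro i
    apply measure_congr
    rw [Filter.eventuallyEq_set]
    filter_upwards [hXY i] with ω hω
    simp [Set.mem_preimage, hω]
  rw [h1, h S hsets]
  exact Finset.prod_congr rfl fun i _ => (h2 i).symm


/-- Bernstein-type concentration for sums of independent exponential random variables.
Let `X₁, …, X_N` be independent exponential random variables with means `μ₁, …, μ_N`
satisfying `Σ μᵢ² ≤ A²` and `max μᵢ ≤ B`.  Fix `a > 1` and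
`γ = a e^{1/a}/(a+1) + 2/(e(a³-a)) - 1`.  Then
`Pr[Σ Xᵢ ≥ t + Σ μᵢ] ≤ exp (-t²/(4γa²A²))` whenever `0 ≤ t ≤ 2γaA²/B`, and
`Pr[Σ Xᵢ ≥ t + Σ μᵢ] ≤ exp (-(t/(aB) - γA²/B²))` whenever `t ≥ 2γaA²/B`. -/
theorem exp_sum_concentration
    {Ω : Type*} [MeasurableSpace Ω] (P : Measure Ω) [IsProbabilityMeasure P]
    (N : ℕ) (X : Fin N → Ω → ℝ) (μs : Fin N → ℝ)
    (hμpos : ∀ i, 0 < μs i)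
    (hindep : iIndepFun X P)
    (hlaw : ∀ i, Measure.map (X i) P = expMeasure (μs i)⁻¹)
    (A B : ℝ) (hA : 0 < A) (hA2 : ∑ i, μs i ^ 2 ≤ A ^ 2) (hB : ∀ i, μs i ≤ B)
    (a γ : ℝ) (ha : 1 < a)
    (hγ : γ = a * Real.exp (1 / a) / (a + 1) + 2 / (Real.exp 1 * (a ^ 3 - a)) - 1)
    (t : ℝ) (ht : 0 ≤ t) :
    (t ≤ 2 * γ * a * A ^ 2 / B →
      (P {ω | t + ∑ i, μs i ≤ ∑ i, X i ω}).toReal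
        ≤ Real.exp (-(t ^ 2 / (4 * γ * a ^ 2 * A ^ 2)))) ∧
    (2 * γ * a * A ^ 2 / B ≤ t →
      (P {ω | t + ∑ i, μs i ≤ ∑ i, X i ω}).toReal
        ≤ Real.exp (-(t / (a * B) - γ * A ^ 2 / B ^ 2))) := by
  have ha0 : (0:ℝ) < a := by linarith
  have hγ0 : 0 < γ := gamma_pos ha hγ
  -- measurable modifications
  have haem : ∀ i, AEMeasurable (X i) P := by
    intro i
    by_contra hc
    have hprob : IsProbabilityMeasure (expMeasure (μs i)⁻¹) :=
      isProbabilityMeasure_expMeasure (inv_pos.2 (hμpos i))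
    have h0 : (expMeasure (μs i)⁻¹) Set.univ = 1 := measure_univ
    rw [← hlaw i, Measure.map_of_not_aemeasurable hc] at h0
    simp at h0
  set Y : Fin N → Ω → ℝ := fun i => (haem i).mk (X i) with hY
  have hYm : ∀ i, Measurable (Y i) := fun i => (haem i).measurable_mk
  have hXYae : ∀ i, X i =ᵐ[P] Y i := fun i => (haem i).ae_eq_mk
  have hYlaw : ∀ i, Measure.map (Y i) P = expMeasure (μs i)⁻¹ := fun i =>
    (Measure.map_congr (hXYae i)).symm.trans (hlaw i)
  have hYindep : iIndepFun Y P := iIndepFun_ae_congr hindep hXYae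
  -- set congruence
  have hset : P {ω | t + ∑ i, μs i ≤ ∑ i, X i ω}
      = P {ω | t + ∑ i, μs i ≤ (∑ i, Y i) ω} := by
    apply measure_congr
    rw [Filter.eventuallyEq_set]
    filter_upwards [ae_all_iff.2 hXYae] with ω hω
    simp only [Set.mem_setOf_eq, Finset.sum_apply]
    rw [Finset.sum_congr rfl fun i _ => hω i]
  -- main Chernoff estimate
  have main : ∀ l : ℝ, 0 ≤ l → (∀ i, l * μs i ≤ 1/a) →
      (P {ω | t + ∑ i, μs i ≤ ∑ i, X i ω}).toReal
        ≤ Real.exp (-(l*t) + γ*a^2*l^2*A^2) := by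
    intro l hl0 hli
    have hlr : ∀ i, l < (μs i)⁻¹ := by
      intro i
      have h1 : l * μs i < 1 := lt_of_le_of_lt (hli i) (by rw [div_lt_one ha0]; linarith)
      rw [show (μs i)⁻¹ = 1 / μs i from (one_div _).symm, lt_div_iff₀ (hμpos i)]
      linarith
    have hint : ∀ i, Integrable (fun ω => Real.exp (l * Y i ω)) P := by
      intro i
      have h := (expMeasure_integral (inv_pos.2 (hμpos i)) (hlr i)).1
      rw [← hYlaw i] at h
      exact (integrable_map_measure (Measurable.aestronglyMeasurable (by fun_prop))
        (hYm i).aemeasurable).1 h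
    have hmgf_i : ∀ i, mgf (Y i) P l = (1 - l * μs i)⁻¹ := by
      intro i
      have hval := (expMeasure_integral (inv_pos.2 (hμpos i)) (hlr i)).2
      have heq : mgf (Y i) P l = ∫ x, Real.exp (l * x) ∂(expMeasure (μs i)⁻¹) := by
        rw [← hYlaw i, integral_map (hYm i).aemeasurable
          (Measurable.aestronglyMeasurable (by fun_prop))]
        rfl
      rw [heq, hval]
      have hμ := hμpos i
      have h1 : (0:ℝ) < 1 - l * μs i := by
        have := lt_of_le_of_lt (hli i) (by rw [div_lt_one ha0]; linarith : 1/a < 1)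
        linarith
      have hμ0 : μs i ≠ 0 := (hμpos i).ne'
      have hd : (0:ℝ) < (μs i)⁻¹ - l := by linarith [hlr i]
      rw [eq_comm, inv_eq_iff_eq_inv, eq_comm, inv_div]
      field_simp
    have h_int_sum : Integrable (fun ω => Real.exp (l * (∑ i, Y i) ω)) P :=
      hYindep.integrable_exp_mul_sum hYm (fun i _ => hint i)
    have hcher := measure_ge_le_exp_mul_mgf (μ := P) (X := ∑ i, Y i)
      (ε := t + ∑ i, μs i) hl0 h_int_sum
    have hmgf_sum := hYindep.mgf_sum hYm (t := l) Finset.univ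
    have hprod : ∏ i, mgf (Y i) P l ≤ Real.exp (∑ i, (l * μs i + γ*a^2*(l*μs i)^2)) := by
      rw [Real.exp_sum]
      apply Finset.prod_le_prod
      · intro i _
        rw [hmgf_i i]
        have h1 : (0:ℝ) < 1 - l * μs i := by
          have := lt_of_le_of_lt (hli i) (by rw [div_lt_one ha0]; linarith : 1/a < 1)
          linarith
        positivity
      · intro i _
        rw [hmgf_i i]
        exact core_ineq ha hγ (mul_nonneg hl0 (hμpos i).le) (hli i)
    have hsum_le : ∑ i, (l * μs i + γ*a^2*(l*μs i)^2)
        ≤ l * (∑ i, μs i) + γ*a^2*l^2*A^2 := by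
      rw [Finset.sum_add_distrib, ← Finset.mul_sum]
      have : ∑ i, γ*a^2*(l*μs i)^2 = γ*a^2*l^2 * ∑ i, μs i^2 := by
        rw [Finset.mul_sum]
        exact Finset.sum_congr rfl fun i _ => by ring
      rw [this]
      have h2 : γ*a^2*l^2 * (∑ i, μs i^2) ≤ γ*a^2*l^2 * A^2 :=
        mul_le_mul_of_nonneg_left hA2 (by positivity)
      nlinarith [h2]
    rw [hset]
    calc (P {ω | t + ∑ i, μs i ≤ (∑ i, Y i) ω}).toReal
        ≤ Real.exp (-l * (t + ∑ i, μs i)) * mgf (∑ i, Y i) P l := hcher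
      _ = Real.exp (-l * (t + ∑ i, μs i)) * ∏ i, mgf (Y i) P l := by rw [hmgf_sum]
      _ ≤ Real.exp (-l * (t + ∑ i, μs i)) * Real.exp (∑ i, (l * μs i + γ*a^2*(l*μs i)^2)) := by
          apply mul_le_mul_of_nonneg_left hprod (Real.exp_pos _).le
      _ ≤ Real.exp (-l * (t + ∑ i, μs i)) * Real.exp (l * (∑ i, μs i) + γ*a^2*l^2*A^2) := by
          apply mul_le_mul_of_nonneg_left (Real.exp_le_exp.2 hsum_le) (Real.exp_pos _).le
      _ = Real.exp (-(l*t) + γ*a^2*l^2*A^2) := by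
          rw [← Real.exp_add]
          congr 1
          ring
  constructor
  · -- branch 1
    intro h1
    set D : ℝ := 2*γ*a^2*A^2 with hD
    have hDpos : (0:ℝ) < D := by positivity
    set l₁ : ℝ := t / D with hl₁
    have hl₁0 : 0 ≤ l₁ := by positivity
    have hli : ∀ i, l₁ * μs i ≤ 1/a := by
      intro i
      have hBpos : 0 < B := lt_of_lt_of_le (hμpos i) (hB i)
      have htB : t * B ≤ 2*γ*a*A^2 := (le_div_iff₀ hBpos).1 h1
      have hle : l₁ * μs i ≤ l₁ * B := mul_le_mul_of_nonneg_left (hB i) hl₁0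
      have h2 : l₁ * B = t*B/D := by rw [hl₁]; ring
      have h3 : t*B/D ≤ 1/a := by
        rw [div_le_div_iff₀ hDpos ha0, hD]
        nlinarith
      linarith
    have := main l₁ hl₁0 hli
    have hexp : -(l₁*t) + γ*a^2*l₁^2*A^2 = -(t^2/(4*γ*a^2*A^2)) := by
      rw [hl₁, hD]
      field_simp
      ring
    rwa [hexp] at this
  · -- branch 2
    intro h2
    rcases isEmpty_or_nonempty (Fin N) with hN | hN
    · -- empty case
      have hset0 : {ω : Ω | t + ∑ i, μs i ≤ ∑ i, X i ω} = {ω : Ω | t ≤ 0} := by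
        ext ω
        simp [Finset.univ_eq_empty]
      rw [hset0]
      rcases eq_or_lt_of_le ht with ht0 | ht0
      · rw [← ht0]
        simp only [le_refl, Set.setOf_true]
        rw [measure_univ]
        simp only [ENNReal.toReal_one]
        have he : -((0:ℝ)/(a*B) - γ*A^2/B^2) = γ*A^2/B^2 := by simp
        rw [he]
        exact Real.one_le_exp (by positivity)
      · have : {ω : Ω | t ≤ 0} = ∅ := by
          ext ω; simp; linarith
        rw [this]
        simp only [measure_empty, ENNReal.toReal_zero]
        exact (Real.exp_pos _).le
    · obtain ⟨i0⟩ := hN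
      have hBpos : 0 < B := lt_of_lt_of_le (hμpos i0) (hB i0)
      set l₂ : ℝ := (a*B)⁻¹ with hl₂
      have hl₂0 : 0 ≤ l₂ := by positivity
      have hli : ∀ i, l₂ * μs i ≤ 1/a := by
        intro i
        have hle : l₂ * μs i ≤ l₂ * B := mul_le_mul_of_nonneg_left (hB i) hl₂0
        have : l₂ * B = 1/a := by rw [hl₂]; field_simp
        linarith
      have := main l₂ hl₂0 hli
      have hexp : -(l₂*t) + γ*a^2*l₂^2*A^2 = -(t/(a*B) - γ*A^2/B^2) := by
        rw [hl₂]
        field_simp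
        ring
      rwa [hexp] at this
end

section
/- Let M be a 2ⁿ × 2ⁿ positive semidefinite complex matrix with trace 1 (a density matrix) that arises as a convex mixture of rank-one projectors U†|g(U)⟩⟨g(U)|U over a distribution 𝒰 on unitaries. Then ‖M‖_F² ≤ E_{U₁,U₂∼𝒰}[ max_{z₁,z₂ ∈ {0,1}ⁿ} |⟨z₁|U₁U₂†|z₂⟩|² ], where M = E_{U∼𝒰}[U†|g(U)⟩⟨g(U)|U] and g maps unitaries to computational basis strings. -/
open MeasureTheory Matrix

/-- Computational basis strings on `n` qubits. -/
abbrev BV (n : ℕ) := Fin n → Fin 2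

noncomputable instance {m k : Type*} : MeasurableSpace (Matrix m k ℂ) :=
  inferInstanceAs (MeasurableSpace (m → k → ℂ))

/-- The matrix `M(g;𝒰) = E_{U∼𝒰}[U† |g(U)⟩⟨g(U)| U]`, defined entrywise. -/
noncomputable def Mmat {n : ℕ} (μ : Measure (Matrix.unitaryGroup (BV n) ℂ))
    (g : Matrix.unitaryGroup (BV n) ℂ → BV n) : Matrix (BV n) (BV n) ℂ :=
  fun i j =>
    ∫ U, ((((U : Matrix (BV n) (BV n) ℂ))ᴴ *
        Matrix.single (g U) (g U) (1:ℂ) * (U : Matrix (BV n) (BV n) ℂ)) i j) ∂μ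

/-- Squared Frobenius norm of a matrix. -/
noncomputable def frobSq {n : ℕ} (A : Matrix (BV n) (BV n) ℂ) : ℝ :=
  ∑ i, ∑ j, ‖A i j‖ ^ 2

open ComplexConjugate

set_option synthInstance.maxHeartbeats 1000000

lemma entry_eq {n : ℕ} (U : Matrix (BV n) (BV n) ℂ) (z i j : BV n) :
    (Uᴴ * Matrix.single z z (1:ℂ) * U) i j
      = conj (U z i) * U z j := by
  simp [Matrix.mul_apply, Matrix.single, Matrix.conjTranspose_apply,
    mul_ite, ite_mul, ite_and, Finset.sum_ite_eq, Finset.mul_sum, Finset.sum_mul]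

lemma unitary_entry_norm_le {n : ℕ} (U : Matrix.unitaryGroup (BV n) ℂ) (i j : BV n) :
    ‖(U : Matrix (BV n) (BV n) ℂ) i j‖ ≤ 1 := by
  have h := U.prop
  rw [Matrix.mem_unitaryGroup_iff] at h
  have h1 : ((U : Matrix (BV n) (BV n) ℂ) * star (U : Matrix (BV n) (BV n) ℂ)) i i = 1 := by
    rw [h]; simp [Matrix.one_apply]
  rw [Matrix.mul_apply] at h1
  simp only [Matrix.star_apply, Complex.star_def, Complex.mul_conj] at h1
  have h2 : ∑ x, Complex.normSq ((U : Matrix (BV n) (BV n) ℂ) i x) = 1 := by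
    exact_mod_cast h1
  have h3 : Complex.normSq ((U : Matrix (BV n) (BV n) ℂ) i j) ≤ 1 := by
    calc Complex.normSq ((U : Matrix (BV n) (BV n) ℂ) i j)
        ≤ ∑ x, Complex.normSq ((U : Matrix (BV n) (BV n) ℂ) i x) :=
          Finset.single_le_sum (fun x _ => Complex.normSq_nonneg _) (Finset.mem_univ j)
      _ = 1 := h2
  rw [Complex.normSq_eq_norm_sq] at h3
  nlinarith [norm_nonneg ((U : Matrix (BV n) (BV n) ℂ) i j)]

lemma prod_entry_norm_le {n : ℕ} (U₁ U₂ : Matrix.unitaryGroup (BV n) ℂ) (z₁ z₂ : BV n) :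
    ‖((U₁ : Matrix (BV n) (BV n) ℂ) * ((U₂ : Matrix (BV n) (BV n) ℂ))ᴴ) z₁ z₂‖ ≤ 1 := by
  have h : (U₁ : Matrix (BV n) (BV n) ℂ) * ((U₂ : Matrix (BV n) (BV n) ℂ))ᴴ
      = ((U₁ * star U₂ : Matrix.unitaryGroup (BV n) ℂ) : Matrix (BV n) (BV n) ℂ) := by
    simp [Matrix.star_eq_conjTranspose]
  rw [h]
  exact unitary_entry_norm_le _ _ _

noncomputable def fent {n : ℕ} (g : Matrix.unitaryGroup (BV n) ℂ → BV n)
    (U : Matrix.unitaryGroup (BV n) ℂ) (i j : BV n) : ℂ :=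
  conj ((U : Matrix (BV n) (BV n) ℂ) (g U) i) * (U : Matrix (BV n) (BV n) ℂ) (g U) j

lemma meas_eval {n : ℕ} {g : Matrix.unitaryGroup (BV n) ℂ → BV n} (hg : Measurable g)
    (i : BV n) :
    Measurable fun U : Matrix.unitaryGroup (BV n) ℂ =>
      (U : Matrix (BV n) (BV n) ℂ) (g U) i := by
  have h : (fun U : Matrix.unitaryGroup (BV n) ℂ => (U : Matrix (BV n) (BV n) ℂ) (g U) i)
      = fun U => ∑ z : BV n, if g U = z then (U : Matrix (BV n) (BV n) ℂ) z i else 0 := by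
    funext U; rw [Finset.sum_ite_eq]; simp
  rw [h]
  refine Finset.measurable_sum _ fun z _ => Measurable.ite ?_ ?_ measurable_const
  · exact hg (MeasurableSet.singleton z)
  · exact (measurable_pi_apply i).comp ((measurable_pi_apply z).comp measurable_subtype_coe)

lemma meas_fent {n : ℕ} {g : Matrix.unitaryGroup (BV n) ℂ → BV n} (hg : Measurable g)
    (i j : BV n) : Measurable fun U => fent g U i j :=
  ((continuous_star.measurable.comp (meas_eval hg i)).mul (meas_eval hg j))

lemma norm_fent_le {n : ℕ} (g : Matrix.unitaryGroup (BV n) ℂ → BV n)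
    (U : Matrix.unitaryGroup (BV n) ℂ) (i j : BV n) : ‖fent g U i j‖ ≤ 1 := by
  have h1 : ‖(U : Matrix (BV n) (BV n) ℂ) (g U) i‖ ≤ 1 := unitary_entry_norm_le U _ _
  have h2 : ‖(U : Matrix (BV n) (BV n) ℂ) (g U) j‖ ≤ 1 := unitary_entry_norm_le U _ _
  rw [fent, norm_mul, RCLike.norm_conj]
  calc ‖(U : Matrix (BV n) (BV n) ℂ) (g U) i‖ * ‖(U : Matrix (BV n) (BV n) ℂ) (g U) j‖
      ≤ 1 * 1 := mul_le_mul h1 h2 (norm_nonneg _) zero_le_one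
    _ = 1 := one_mul 1

lemma sum_ident {n : ℕ} (g : Matrix.unitaryGroup (BV n) ℂ → BV n)
    (U₁ U₂ : Matrix.unitaryGroup (BV n) ℂ) :
    ∑ i : BV n, ∑ j : BV n, (fent g U₁ i j * conj (fent g U₂ i j)).re
      = ‖((U₁ : Matrix (BV n) (BV n) ℂ) * ((U₂ : Matrix (BV n) (BV n) ℂ))ᴴ) (g U₁) (g U₂)‖ ^ 2 := by
  set W : ℂ := ((U₁ : Matrix (BV n) (BV n) ℂ) * ((U₂ : Matrix (BV n) (BV n) ℂ))ᴴ) (g U₁) (g U₂) with hWdef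
  have hW : W = ∑ k, (U₁ : Matrix (BV n) (BV n) ℂ) (g U₁) k
      * conj ((U₂ : Matrix (BV n) (BV n) ℂ) (g U₂) k) := by
    simp [hWdef, Matrix.mul_apply, Matrix.conjTranspose_apply]
  have key : ∑ i : BV n, ∑ j : BV n, fent g U₁ i j * conj (fent g U₂ i j)
      = conj W * W := by
    rw [hW, map_sum, Finset.sum_mul_sum]
    refine Finset.sum_congr rfl fun i _ => Finset.sum_congr rfl fun j _ => ?_
    simp only [fent, _root_.map_mul, Complex.conj_conj]
    ring
  have h : (∑ i : BV n, ∑ j : BV n, fent g U₁ i j * conj (fent g U₂ i j)).re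
      = ‖W‖ ^ 2 := by
    rw [key, mul_comm, Complex.mul_conj]
    simp [Complex.normSq_eq_norm_sq, ← Complex.ofReal_pow]
  rw [← h, Complex.re_sum]
  exact Finset.sum_congr rfl fun i _ => (Complex.re_sum _ _).symm

/-- For any distribution `𝒰` over `U(2ⁿ)` and any (measurable) `g : U(2ⁿ) → {0,1}ⁿ`,
`‖M(g;𝒰)‖_F² ≤ E_{U₁,U₂∼𝒰}[max_{z₁,z₂} |⟨z₁|U₁U₂†|z₂⟩|²]`. -/
theorem frobSq_Mmat_le
    (n : ℕ) (μ : Measure (Matrix.unitaryGroup (BV n) ℂ)) [IsProbabilityMeasure μ]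
    (g : Matrix.unitaryGroup (BV n) ℂ → BV n) (hg : Measurable g) :
    frobSq (Mmat μ g)
      ≤ ∫ p, (⨆ z₁ : BV n, ⨆ z₂ : BV n,
            ‖((p.1 : Matrix (BV n) (BV n) ℂ) * ((p.2 : Matrix (BV n) (BV n) ℂ))ᴴ) z₁ z₂‖ ^ 2)
          ∂(μ.prod μ) := by
  classical
  -- basic facts
  have hM : ∀ i j, Mmat μ g i j = ∫ U, fent g U i j ∂μ := by
    intro i j
    unfold Mmat
    exact integral_congr_ae (Filter.Eventually.of_forall fun U => entry_eq _ _ _ _)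
  have hint : ∀ i j : BV n, Integrable (fun U => fent g U i j) μ := by
    intro i j
    refine ⟨(meas_fent hg i j).aestronglyMeasurable, ?_⟩
    exact HasFiniteIntegral.of_bounded (C := 1)
      (Filter.Eventually.of_forall fun U => norm_fent_le g U i j)
  have hmeasp : ∀ i j : BV n,
      Measurable (fun p : Matrix.unitaryGroup (BV n) ℂ × Matrix.unitaryGroup (BV n) ℂ =>
        fent g p.1 i j * conj (fent g p.2 i j)) := by
    intro i j
    exact ((meas_fent hg i j).comp measurable_fst).mul
      (continuous_star.measurable.comp ((meas_fent hg i j).comp measurable_snd))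
  have hintp : ∀ i j : BV n,
      Integrable (fun p : Matrix.unitaryGroup (BV n) ℂ × Matrix.unitaryGroup (BV n) ℂ =>
        fent g p.1 i j * conj (fent g p.2 i j)) (μ.prod μ) := by
    intro i j
    refine ⟨(hmeasp i j).aestronglyMeasurable, ?_⟩
    refine HasFiniteIntegral.of_bounded (C := 1) (Filter.Eventually.of_forall fun p => ?_)
    rw [norm_mul, RCLike.norm_conj]
    calc ‖fent g p.1 i j‖ * ‖fent g p.2 i j‖
        ≤ 1 * 1 := mul_le_mul (norm_fent_le _ _ _ _) (norm_fent_le _ _ _ _)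
          (norm_nonneg _) zero_le_one
      _ = 1 := one_mul 1
  -- entrywise formula for the squared norm
  have hnorm : ∀ i j, ‖Mmat μ g i j‖ ^ 2
      = ∫ p, (fent g p.1 i j * conj (fent g p.2 i j)).re ∂(μ.prod μ) := by
    intro i j
    have h1 : (∫ p, fent g p.1 i j * conj (fent g p.2 i j) ∂(μ.prod μ))
        = (∫ U, fent g U i j ∂μ) * (∫ U, conj (fent g U i j) ∂μ) :=
      integral_prod_mul (f := fun U => fent g U i j) (g := fun U => conj (fent g U i j))
    rw [integral_conj] at h1
    have h2 := integral_re (hintp i j)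
    rw [h1] at h2
    simp only [RCLike.re_to_complex] at h2
    rw [hM i j, h2, Complex.mul_conj]
    simp [Complex.normSq_eq_norm_sq, ← Complex.ofReal_pow]
  have hre : ∀ i j : BV n,
      Integrable (fun p : Matrix.unitaryGroup (BV n) ℂ × Matrix.unitaryGroup (BV n) ℂ =>
        (fent g p.1 i j * conj (fent g p.2 i j)).re) (μ.prod μ) := fun i j => (hintp i j).re
  -- swap sum and integral
  have hswap : frobSq (Mmat μ g)
      = ∫ p, ∑ i : BV n, ∑ j : BV n,
          (fent g p.1 i j * conj (fent g p.2 i j)).re ∂(μ.prod μ) := by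
    rw [frobSq]
    rw [integral_finset_sum _ (fun i _ => integrable_finset_sum _ (fun j _ => hre i j))]
    refine Finset.sum_congr rfl fun i _ => ?_
    rw [integral_finset_sum _ (fun j _ => hre i j)]
    exact Finset.sum_congr rfl fun j _ => hnorm i j
  have meas_entry : ∀ (z i : BV n), Measurable fun U : Matrix.unitaryGroup (BV n) ℂ =>
      (U : Matrix (BV n) (BV n) ℂ) z i := fun z i =>
    (measurable_pi_apply i).comp ((measurable_pi_apply z).comp measurable_subtype_coe)
  have hnn : ∀ p : Matrix.unitaryGroup (BV n) ℂ × Matrix.unitaryGroup (BV n) ℂ,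
      (0:ℝ) ≤ ∑ i : BV n, ∑ j : BV n, (fent g p.1 i j * conj (fent g p.2 i j)).re := by
    intro p
    rw [sum_ident]
    positivity
  have hle : ∀ p : Matrix.unitaryGroup (BV n) ℂ × Matrix.unitaryGroup (BV n) ℂ,
      ∑ i : BV n, ∑ j : BV n, (fent g p.1 i j * conj (fent g p.2 i j)).re
        ≤ ⨆ z₁ : BV n, ⨆ z₂ : BV n,
            ‖((p.1 : Matrix (BV n) (BV n) ℂ) * ((p.2 : Matrix (BV n) (BV n) ℂ))ᴴ) z₁ z₂‖ ^ 2 := by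
    intro p
    rw [sum_ident]
    refine le_ciSup_of_le (Set.Finite.bddAbove (Set.finite_range _)) (g p.1) ?_
    exact le_ciSup (f := fun z₂ => ‖((p.1 : Matrix (BV n) (BV n) ℂ)
      * ((p.2 : Matrix (BV n) (BV n) ℂ))ᴴ) (g p.1) z₂‖ ^ 2)
      (Set.Finite.bddAbove (Set.finite_range _)) (g p.2)
  have hintsup : Integrable (fun p : Matrix.unitaryGroup (BV n) ℂ × Matrix.unitaryGroup (BV n) ℂ =>
      ⨆ z₁ : BV n, ⨆ z₂ : BV n,
        ‖((p.1 : Matrix (BV n) (BV n) ℂ) * ((p.2 : Matrix (BV n) (BV n) ℂ))ᴴ) z₁ z₂‖ ^ 2)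
      (μ.prod μ) := by
    have hm : ∀ z₁ z₂ : BV n,
        Measurable (fun p : Matrix.unitaryGroup (BV n) ℂ × Matrix.unitaryGroup (BV n) ℂ =>
          ((p.1 : Matrix (BV n) (BV n) ℂ) * ((p.2 : Matrix (BV n) (BV n) ℂ))ᴴ) z₁ z₂) := by
      intro z₁ z₂
      have hent : (fun p : Matrix.unitaryGroup (BV n) ℂ × Matrix.unitaryGroup (BV n) ℂ =>
          ((p.1 : Matrix (BV n) (BV n) ℂ) * ((p.2 : Matrix (BV n) (BV n) ℂ))ᴴ) z₁ z₂)
          = fun p => ∑ k, (p.1 : Matrix (BV n) (BV n) ℂ) z₁ k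
              * conj ((p.2 : Matrix (BV n) (BV n) ℂ) z₂ k) := by
        funext p; simp [Matrix.mul_apply, Matrix.conjTranspose_apply]
      rw [hent]
      refine Finset.measurable_sum _ fun k _ => Measurable.mul ?_ ?_
      · exact (meas_entry z₁ k).comp measurable_fst
      · exact continuous_star.measurable.comp ((meas_entry z₂ k).comp measurable_snd)
    have hsupnn : ∀ p : Matrix.unitaryGroup (BV n) ℂ × Matrix.unitaryGroup (BV n) ℂ,
        (0:ℝ) ≤ ⨆ z₁ : BV n, ⨆ z₂ : BV n,
          ‖((p.1 : Matrix (BV n) (BV n) ℂ) * ((p.2 : Matrix (BV n) (BV n) ℂ))ᴴ) z₁ z₂‖ ^ 2 := by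
      intro p
      refine le_ciSup_of_le (Set.Finite.bddAbove (Set.finite_range _)) (g p.1) ?_
      refine le_ciSup_of_le (Set.Finite.bddAbove (Set.finite_range _)) (g p.2) ?_
      positivity
    constructor
    · exact (Measurable.iSup fun z₁ => Measurable.iSup fun z₂ =>
        ((hm z₁ z₂).norm.pow_const 2)).aestronglyMeasurable
    · refine HasFiniteIntegral.of_bounded (C := 1) (Filter.Eventually.of_forall fun p => ?_)
      rw [Real.norm_eq_abs, abs_le]
      constructor
      · linarith [hsupnn p]
      · refine ciSup_le fun z₁ => ciSup_le fun z₂ => ?_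
        have h := prod_entry_norm_le p.1 p.2 z₁ z₂
        nlinarith [norm_nonneg (((p.1 : Matrix (BV n) (BV n) ℂ)
          * ((p.2 : Matrix (BV n) (BV n) ℂ))ᴴ) z₁ z₂)]
  rw [hswap]
  exact integral_mono_of_nonneg (Filter.Eventually.of_forall hnn) hintsup
    (Filter.Eventually.of_forall hle)
end
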